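/- arXiv:1404.5802 — 3 statements merged into one kernel-verified Lean document; each statement's English description precedes it below -/
import Mathlib

section
/- (Andreief/Heine identity) Let μ be a measure on ℝ and let φ_1,...,φ_n and ψ_1,...,ψ_n be μ-integrable functions such that all products φ_j ψ_k are μ-integrable. Then ∫⋯∫ det[φ_j(x_k)]_{j,k=1}^n · det[ψ_k(x_j)]_{j,k=1}^n dμ(x_1)⋯dμ(x_n) = n! · det[∫ φ_j(x) ψ_k(x) dμ(x)]_{j,k=1}^n. -/
open MeasureTheory

section AndreiefAux

open Set

lemma my_pi_null {n : ℕ} (μ : Measure ℝ) {N : Set ℝ} (hN : μ N = 0) (i : Fin n) :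
    Measure.pi (fun _ : Fin n => μ) (Function.eval i ⁻¹' N) = 0 := by
  rcases exists_measurable_superset_of_null hN with ⟨t, hst, htm, hμt⟩
  refine measure_mono_null (Set.preimage_mono hst) ?_
  have hmeas : ∀ j, MeasurableSet (Function.update (fun _ : Fin n => (univ : Set ℝ)) i t j) := by
    intro j
    rcases eq_or_ne j i with rfl | hj
    · simpa using htm
    · simp [Function.update_of_ne hj]
  rw [← Set.univ_pi_update_univ, Measure.pi_def,
    toMeasure_apply _ _ (MeasurableSet.univ_pi hmeas)]
  refine le_antisymm ?_ zero_le
  refine (OuterMeasure.pi_pi_le _ _).trans_eq ?_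
  refine Finset.prod_eq_zero (Finset.mem_univ i) ?_
  simp [hμt]

lemma my_pi_mono {n : ℕ} {μ ν : Measure ℝ} (h : ∀ s, ν s ≤ μ s) {s : Set (Fin n → ℝ)}
    (hs : MeasurableSet s) :
    Measure.pi (fun _ : Fin n => ν) s ≤ Measure.pi (fun _ : Fin n => μ) s := by
  rw [Measure.pi_def, Measure.pi_def, toMeasure_apply _ _ hs, toMeasure_apply _ _ hs]
  have : (OuterMeasure.pi fun _ : Fin n => ν.toOuterMeasure) ≤
      OuterMeasure.pi fun _ : Fin n => μ.toOuterMeasure := by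
    rw [OuterMeasure.pi, OuterMeasure.pi, OuterMeasure.le_boundedBy]
    intro u
    refine (OuterMeasure.boundedBy_le _).trans ?_
    unfold piPremeasure
    exact Finset.prod_le_prod' fun j _ => h _
  exact this _

lemma my_restrict_le (μ : Measure ℝ) {T : Set ℝ} (hT : MeasurableSet T) :
    ∀ s, μ.restrict T s ≤ μ s := by
  intro s
  rw [Measure.restrict_apply' hT]
  exact measure_mono inter_subset_left

lemma my_pi_box {n : ℕ} (μ : Measure ℝ) {T : Set ℝ} (hT : MeasurableSet T)
    [SigmaFinite (μ.restrict T)] (t : Fin n → Set ℝ) (htm : ∀ i, MeasurableSet (t i))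
    (hsub : ∀ i, t i ⊆ T) :
    Measure.pi (fun _ : Fin n => μ) (Set.pi Set.univ t) = ∏ i, μ (t i) := by
  refine le_antisymm ?_ ?_
  · rw [Measure.pi_def, toMeasure_apply _ _ (MeasurableSet.univ_pi htm)]
    exact (OuterMeasure.pi_pi_le _ _).trans_eq (by simp)
  · have h1 : ∀ i, (μ.restrict T) (t i) = μ (t i) := by
      intro i
      rw [Measure.restrict_apply (htm i), inter_eq_self_of_subset_left (hsub i)]
    calc ∏ i, μ (t i) = ∏ i : Fin n, (μ.restrict T) (t i) := by
          exact Finset.prod_congr rfl fun i _ => (h1 i).symm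
      _ = Measure.pi (fun _ : Fin n => μ.restrict T) (Set.pi Set.univ t) :=
          (Measure.pi_pi _ _).symm
      _ ≤ _ := my_pi_mono (my_restrict_le μ hT) (MeasurableSet.univ_pi htm)

lemma my_restrict_pi {n : ℕ} (μ : Measure ℝ) {T : Set ℝ} (hT : MeasurableSet T)
    [SigmaFinite (μ.restrict T)] :
    Measure.pi (fun _ : Fin n => μ.restrict T)
      = (Measure.pi fun _ : Fin n => μ).restrict (Set.pi Set.univ fun _ => T) := by
  refine Measure.pi_eq fun s hs => ?_
  rw [Measure.restrict_apply' (MeasurableSet.univ_pi fun _ => hT), ← Set.pi_inter_distrib,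
    my_pi_box μ hT _ (fun i => (hs i).inter hT) (fun i => inter_subset_right)]
  exact Finset.prod_congr rfl fun i _ => (Measure.restrict_apply (hs i)).symm

lemma my_sf_iUnion {ι : Type*} [Finite ι] (μ : Measure ℝ) (s : ι → Set ℝ)
    [∀ i, SigmaFinite (μ.restrict (s i))] : SigmaFinite (μ.restrict (⋃ i, s i)) :=
  Measure.sigmaFinite_of_le (Measure.sum fun i => μ.restrict (s i)) Measure.restrict_iUnion_le

lemma my_comp_eq {m : ℕ} (f : Fin (m + 1) → ℝ → ℝ) :
    (fun x : Fin (m + 1) → ℝ => ∏ i, f i (x i)) =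
      (fun y : ℝ × (Fin m → ℝ) => f 0 y.1 * ∏ j : Fin m, f j.succ (y.2 j)) ∘
        (MeasurableEquiv.piFinSuccAbove (fun _ : Fin (m + 1) => ℝ) 0) := by
  funext x
  simp only [Function.comp_apply, MeasurableEquiv.piFinSuccAbove, MeasurableEquiv.coe_mk,
    Fin.insertNthEquiv, Equiv.coe_fn_symm_mk]
  rw [Fin.prod_univ_succ]
  simp [Fin.removeNth, Fin.zero_succAbove]

lemma my_integrable_pi_prod {n : ℕ} (ν : Measure ℝ) [SigmaFinite ν] (f : Fin n → ℝ → ℝ)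
    (hf : ∀ i, Integrable (f i) ν) :
    Integrable (fun x : Fin n → ℝ => ∏ i, f i (x i)) (Measure.pi fun _ => ν) := by
  induction n with
  | zero =>
      simp only [Finset.univ_eq_empty, Finset.prod_empty]
      have : IsProbabilityMeasure (Measure.pi fun _ : Fin 0 => ν) := by
        constructor; rw [Measure.pi_univ]; simp
      exact integrable_const 1
  | succ m ih =>
      have hp := measurePreserving_piFinSuccAbove (fun _ : Fin (m + 1) => ν) 0
      have he := MeasurableEquiv.measurableEmbedding
        (MeasurableEquiv.piFinSuccAbove (fun _ : Fin (m + 1) => ℝ) 0)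
      rw [my_comp_eq f, hp.integrable_comp_emb he]
      exact Integrable.mul_prod (hf 0) (ih _ fun i => hf i.succ)

lemma my_integral_pi_prod {n : ℕ} (ν : Measure ℝ) [SigmaFinite ν] (f : Fin n → ℝ → ℝ) :
    ∫ x : Fin n → ℝ, ∏ i, f i (x i) ∂(Measure.pi fun _ => ν) = ∏ i, ∫ x, f i x ∂ν := by
  induction n with
  | zero =>
      have : IsProbabilityMeasure (Measure.pi fun _ : Fin 0 => ν) := by
        constructor; rw [Measure.pi_univ]; simp
      simp
  | succ m ih =>
      have hp := measurePreserving_piFinSuccAbove (fun _ : Fin (m + 1) => ν) 0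
      calc ∫ x : Fin (m + 1) → ℝ, ∏ i, f i (x i) ∂(Measure.pi fun _ => ν)
          = ∫ y : ℝ × (Fin m → ℝ), f 0 y.1 * ∏ j : Fin m, f j.succ (y.2 j)
            ∂(ν.prod (Measure.pi fun _ => ν)) := by
            rw [my_comp_eq f]
            exact hp.integral_comp'
              (fun y : ℝ × (Fin m → ℝ) => f 0 y.1 * ∏ j : Fin m, f j.succ (y.2 j))
        _ = (∫ x, f 0 x ∂ν) * ∫ y : Fin m → ℝ, ∏ j : Fin m, f j.succ (y j)
            ∂(Measure.pi fun _ => ν) :=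
            integral_prod_mul (f 0) (fun y : Fin m → ℝ => ∏ j : Fin m, f j.succ (y j))
        _ = ∏ i, ∫ x, f i x ∂ν := by
            rw [ih, (Fin.prod_univ_succ fun i => ∫ x, f i x ∂ν)]

set_option linter.unusedTactic false in
lemma andreief_core {n : ℕ} (ν : Measure ℝ) [SigmaFinite ν] (g h : Fin n → ℝ → ℝ)
    (hgh : ∀ j k, Integrable (fun x => g j x * h k x) ν) :
    ∫ x : Fin n → ℝ,
        (Matrix.det (Matrix.of fun j k => g j (x k))) *
        (Matrix.det (Matrix.of fun j k => h k (x j)))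
        ∂(Measure.pi fun _ => ν)
      = (n.factorial : ℝ) * Matrix.det (Matrix.of fun j k => ∫ x, g j x * h k x ∂ν) := by
  classical
  set A : Matrix (Fin n) (Fin n) ℝ := Matrix.of fun j k => ∫ x, g j x * h k x ∂ν with hA
  have expand : ∀ x : Fin n → ℝ,
      (Matrix.det (Matrix.of fun j k => g j (x k))) *
        (Matrix.det (Matrix.of fun j k => h k (x j)))
      = ∑ σ : Equiv.Perm (Fin n), ∑ τ : Equiv.Perm (Fin n),
          (((Equiv.Perm.sign σ : ℤ) : ℝ) * ((Equiv.Perm.sign τ : ℤ) : ℝ)) *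
            ∏ i, (g (τ i) (x i) * h (σ⁻¹ i) (x i)) := by
    intro x
    rw [Matrix.det_apply', Matrix.det_apply', Finset.sum_mul_sum, Finset.sum_comm]
    refine Finset.sum_congr rfl fun σ _ => Finset.sum_congr rfl fun τ _ => ?_
    have h1 : (∏ i, (Matrix.of fun j k => h k (x j)) (σ i) i) = ∏ i, h (σ⁻¹ i) (x i) := by
      rw [← Equiv.prod_comp σ (fun i => h (σ⁻¹ i) (x i))]
      simp
    rw [h1, Finset.prod_mul_distrib]
    simp only [Matrix.of_apply]
    ring
  have hInt : ∀ σ τ : Equiv.Perm (Fin n),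
      Integrable (fun x : Fin n → ℝ => ∏ i, (g (τ i) (x i) * h (σ⁻¹ i) (x i)))
        (Measure.pi fun _ => ν) := fun σ τ =>
    my_integrable_pi_prod ν (fun i t => g (τ i) t * h (σ⁻¹ i) t) fun i => hgh _ _
  have step1 : (∫ x : Fin n → ℝ,
        (Matrix.det (Matrix.of fun j k => g j (x k))) *
          (Matrix.det (Matrix.of fun j k => h k (x j))) ∂(Measure.pi fun _ => ν))
      = ∑ σ : Equiv.Perm (Fin n), ∑ τ : Equiv.Perm (Fin n),
          (((Equiv.Perm.sign σ : ℤ) : ℝ) * ((Equiv.Perm.sign τ : ℤ) : ℝ)) *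
            ∏ i, A (τ i) (σ⁻¹ i) := by
    have e1 : (∫ x : Fin n → ℝ,
        (Matrix.det (Matrix.of fun j k => g j (x k))) *
          (Matrix.det (Matrix.of fun j k => h k (x j))) ∂(Measure.pi fun _ => ν))
        = ∫ x : Fin n → ℝ, ∑ p : Equiv.Perm (Fin n) × Equiv.Perm (Fin n),
            (((Equiv.Perm.sign p.1 : ℤ) : ℝ) * ((Equiv.Perm.sign p.2 : ℤ) : ℝ)) *
              ∏ i, (g (p.2 i) (x i) * h (p.1⁻¹ i) (x i)) ∂(Measure.pi fun _ => ν) := by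
      refine integral_congr_ae (Filter.Eventually.of_forall fun x => ?_)
      dsimp only
      rw [expand x, Fintype.sum_prod_type]
    rw [e1, integral_finset_sum _ fun p _ => ((hInt p.1 p.2).const_mul _),
      Fintype.sum_prod_type]
    refine Finset.sum_congr rfl fun σ _ => Finset.sum_congr rfl fun τ _ => ?_
    dsimp only
    rw [integral_const_mul]
    rw [show (∫ a : Fin n → ℝ, ∏ i, g (τ i) (a i) * h (σ⁻¹ i) (a i) ∂(Measure.pi fun _ => ν))
        = ∏ i, ∫ t, g (τ i) t * h (σ⁻¹ i) t ∂ν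
      from my_integral_pi_prod ν fun i t => g (τ i) t * h (σ⁻¹ i) t]
    rfl
  rw [step1]
  have inner : ∀ σ : Equiv.Perm (Fin n),
      (∑ τ : Equiv.Perm (Fin n),
          (((Equiv.Perm.sign σ : ℤ) : ℝ) * ((Equiv.Perm.sign τ : ℤ) : ℝ)) *
            ∏ i, A (τ i) (σ⁻¹ i)) = A.det := by
    intro σ
    have hsub : (∑ τ : Equiv.Perm (Fin n),
        ((Equiv.Perm.sign τ : ℤ) : ℝ) * ∏ i, A (τ i) (σ⁻¹ i))
        = (A.submatrix id ⇑σ⁻¹).det := by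
      rw [Matrix.det_apply']
      rfl
    have hsq : ((Equiv.Perm.sign σ : ℤ) : ℝ) * ((Equiv.Perm.sign σ : ℤ) : ℝ) = 1 := by
      rw [← Int.cast_mul, ← Units.val_mul, Int.units_mul_self, Units.val_one, Int.cast_one]
    calc (∑ τ : Equiv.Perm (Fin n),
          (((Equiv.Perm.sign σ : ℤ) : ℝ) * ((Equiv.Perm.sign τ : ℤ) : ℝ)) *
            ∏ i, A (τ i) (σ⁻¹ i))
        = ((Equiv.Perm.sign σ : ℤ) : ℝ) * ∑ τ : Equiv.Perm (Fin n),
            ((Equiv.Perm.sign τ : ℤ) : ℝ) * ∏ i, A (τ i) (σ⁻¹ i) := by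
          rw [Finset.mul_sum]
          exact Finset.sum_congr rfl fun τ _ => by ring
      _ = ((Equiv.Perm.sign σ : ℤ) : ℝ) * (A.submatrix id ⇑σ⁻¹).det := by rw [hsub]
      _ = A.det := by
          rw [Matrix.det_permute', Equiv.Perm.sign_inv, ← mul_assoc]
          push_cast
          rw [hsq, one_mul]
  rw [Finset.sum_congr rfl fun σ _ => inner σ, Finset.sum_const, Finset.card_univ,
    Fintype.card_perm, Fintype.card_fin, nsmul_eq_mul]

end AndreiefAux

theorem andreief_identity (n : ℕ) (μ : Measure ℝ)
    (φ ψ : Fin n → ℝ → ℝ)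
    (hφ : ∀ j, Integrable (φ j) μ) (hψ : ∀ k, Integrable (ψ k) μ)
    (hφψ : ∀ j k, Integrable (fun x => φ j x * ψ k x) μ) :
    ∫ x : Fin n → ℝ,
        (Matrix.det (Matrix.of fun j k => φ j (x k))) *
        (Matrix.det (Matrix.of fun j k => ψ k (x j)))
        ∂(Measure.pi fun _ => μ)
      = (n.factorial : ℝ) *
        Matrix.det (Matrix.of fun j k => ∫ x, φ j x * ψ k x ∂μ) := by
  classical
  have hφf : ∀ j, AEFinStronglyMeasurable (φ j) μ := fun j => (hφ j).aefinStronglyMeasurable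
  have hψf : ∀ k, AEFinStronglyMeasurable (ψ k) μ := fun k => (hψ k).aefinStronglyMeasurable
  set T : Set ℝ := (⋃ j, (hφf j).sigmaFiniteSet) ∪ ⋃ k, (hψf k).sigmaFiniteSet with hTdef
  have hT : MeasurableSet T :=
    (MeasurableSet.iUnion fun j => (hφf j).measurableSet).union
      (MeasurableSet.iUnion fun k => (hψf k).measurableSet)
  haveI hsf1 : SigmaFinite (μ.restrict (⋃ j, (hφf j).sigmaFiniteSet)) :=
    my_sf_iUnion μ _
  haveI hsf2 : SigmaFinite (μ.restrict (⋃ k, (hψf k).sigmaFiniteSet)) :=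
    my_sf_iUnion μ _
  haveI hsfT : SigmaFinite (μ.restrict T) := by
    rw [hTdef]
    infer_instance
  set g : Fin n → ℝ → ℝ := fun j => T.indicator ((hφ j).1.mk (φ j)) with hgdef
  set h : Fin n → ℝ → ℝ := fun k => T.indicator ((hψ k).1.mk (ψ k)) with hhdef
  have hsubT : ∀ j, (hφf j).sigmaFiniteSet ⊆ T := by
    intro j
    rw [hTdef]
    exact (Set.subset_iUnion (fun j => (hφf j).sigmaFiniteSet) j).trans Set.subset_union_left
  have hsubT' : ∀ k, (hψf k).sigmaFiniteSet ⊆ T := by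
    intro k
    rw [hTdef]
    exact (Set.subset_iUnion (fun k => (hψf k).sigmaFiniteSet) k).trans Set.subset_union_right
  -- φ j =ᵐ[μ] g j
  have key_ae : ∀ (f : ℝ → ℝ) (hf : AEStronglyMeasurable f μ)
      (hzero : f =ᵐ[μ.restrict Tᶜ] 0), f =ᵐ[μ] T.indicator (hf.mk f) := by
    intro f hf hzero
    have h1 : μ {x | f x ≠ hf.mk f x} = 0 := by
      have := hf.ae_eq_mk
      rwa [Filter.EventuallyEq, ae_iff] at this
    have h2 : μ ({x | f x ≠ 0} ∩ Tᶜ) = 0 := by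
      rw [Filter.EventuallyEq, ae_iff] at hzero
      rw [Measure.restrict_apply' hT.compl] at hzero
      exact hzero
    rw [Filter.EventuallyEq, ae_iff]
    refine measure_mono_null (fun x hx => ?_) (measure_union_null h1 h2)
    simp only [Set.mem_setOf_eq] at hx ⊢
    by_cases hxT : x ∈ T
    · left
      intro hc
      exact hx (by rw [hc, Set.indicator_of_mem hxT])
    · right
      refine ⟨fun hc => hx ?_, hxT⟩
      rw [hc, Set.indicator_of_notMem hxT]
  have hzeroφ : ∀ j, φ j =ᵐ[μ.restrict Tᶜ] 0 := by
    intro j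
    refine Filter.EventuallyEq.filter_mono (hφf j).ae_eq_zero_compl
      (MeasureTheory.ae_mono (Measure.restrict_mono (Set.compl_subset_compl.2 (hsubT j)) le_rfl))
  have hzeroψ : ∀ k, ψ k =ᵐ[μ.restrict Tᶜ] 0 := by
    intro k
    refine Filter.EventuallyEq.filter_mono (hψf k).ae_eq_zero_compl
      (MeasureTheory.ae_mono (Measure.restrict_mono (Set.compl_subset_compl.2 (hsubT' k)) le_rfl))
  have hgae : ∀ j, φ j =ᵐ[μ] g j := fun j => key_ae (φ j) (hφ j).1 (hzeroφ j)
  have hhae : ∀ k, ψ k =ᵐ[μ] h k := fun k => key_ae (ψ k) (hψ k).1 (hzeroψ k)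
  have hgT : ∀ j x, x ∉ T → g j x = 0 := fun j x hx => Set.indicator_of_notMem hx _
  have hhT : ∀ k x, x ∉ T → h k x = 0 := fun k x hx => Set.indicator_of_notMem hx _
  have hghμ : ∀ j k, Integrable (fun x => g j x * h k x) μ := fun j k =>
    (hφψ j k).congr ((hgae j).mul (hhae k))
  have hghν : ∀ j k, Integrable (fun x => g j x * h k x) (μ.restrict T) := fun j k =>
    (hghμ j k).restrict
  have hint_eq : ∀ j k, (∫ x, g j x * h k x ∂μ.restrict T) = ∫ x, φ j x * ψ k x ∂μ := by
    intro j k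
    have e1 : (fun x => g j x * h k x) = T.indicator (fun x => g j x * h k x) := by
      funext x
      by_cases hx : x ∈ T
      · rw [Set.indicator_of_mem hx]
      · rw [Set.indicator_of_notMem hx, hgT j x hx, zero_mul]
    calc (∫ x, g j x * h k x ∂μ.restrict T)
        = ∫ x, T.indicator (fun x => g j x * h k x) x ∂μ := (integral_indicator hT).symm
      _ = ∫ x, g j x * h k x ∂μ := by rw [← e1]
      _ = ∫ x, φ j x * ψ k x ∂μ := integral_congr_ae ((hgae j).mul (hhae k)).symm
  -- transfer of the big integral
  have hae_det : (fun x : Fin n → ℝ =>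
      (Matrix.det (Matrix.of fun j k => φ j (x k))) *
        (Matrix.det (Matrix.of fun j k => ψ k (x j))))
      =ᵐ[Measure.pi fun _ => μ]
      (fun x : Fin n → ℝ =>
      (Matrix.det (Matrix.of fun j k => g j (x k))) *
        (Matrix.det (Matrix.of fun j k => h k (x j)))) := by
    set N : Set ℝ := {t : ℝ | ¬ ((∀ j, φ j t = g j t) ∧ (∀ k, ψ k t = h k t))} with hNdef
    have hN : μ N = 0 := by
      have hall : ∀ᵐ t ∂μ, (∀ j, φ j t = g j t) ∧ (∀ k, ψ k t = h k t) :=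
        Filter.Eventually.and (ae_all_iff.2 fun j => hgae j) (ae_all_iff.2 fun k => hhae k)
      rw [ae_iff] at hall
      exact hall
    have hbad : (Measure.pi fun _ : Fin n => μ) (⋃ i, Function.eval i ⁻¹' N) = 0 :=
      measure_iUnion_null fun i => my_pi_null μ hN i
    rw [Filter.EventuallyEq, ae_iff]
    refine measure_mono_null (fun x hx => ?_) hbad
    simp only [Set.mem_setOf_eq] at hx
    by_contra hxU
    apply hx
    have hxi : ∀ i, (∀ j, φ j (x i) = g j (x i)) ∧ (∀ k, ψ k (x i) = h k (x i)) := by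
      intro i
      by_contra hc
      exact hxU (Set.mem_iUnion.2 ⟨i, hc⟩)
    have m1 : (Matrix.of fun j k => φ j (x k)) = Matrix.of fun j k => g j (x k) := by
      ext j k
      exact (hxi k).1 j
    have m2 : (Matrix.of fun j k => ψ k (x j)) = Matrix.of fun j k => h k (x j) := by
      ext j k
      exact (hxi j).2 k
    rw [m1, m2]
  have hbox : MeasurableSet (Set.pi Set.univ fun _ : Fin n => T) :=
    MeasurableSet.univ_pi fun _ => hT
  have hzero : ∀ x : Fin n → ℝ, x ∉ (Set.pi Set.univ fun _ : Fin n => T) →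
      (Matrix.det (Matrix.of fun j k => g j (x k))) *
        (Matrix.det (Matrix.of fun j k => h k (x j))) = 0 := by
    intro x hx
    obtain ⟨i, hi⟩ : ∃ i, x i ∉ T := by simpa [Set.mem_pi] using hx
    have : (Matrix.of fun j k => g j (x k)).det = 0 :=
      Matrix.det_eq_zero_of_column_eq_zero i fun j => hgT j (x i) hi
    rw [this, zero_mul]
  have hind : (fun x : Fin n → ℝ =>
      (Matrix.det (Matrix.of fun j k => g j (x k))) *
        (Matrix.det (Matrix.of fun j k => h k (x j))))
      = (Set.pi Set.univ fun _ : Fin n => T).indicator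
        (fun x : Fin n → ℝ =>
          (Matrix.det (Matrix.of fun j k => g j (x k))) *
            (Matrix.det (Matrix.of fun j k => h k (x j)))) := by
    funext x
    by_cases hx : x ∈ (Set.pi Set.univ fun _ : Fin n => T)
    · rw [Set.indicator_of_mem hx]
    · rw [Set.indicator_of_notMem hx, hzero x hx]
  calc (∫ x : Fin n → ℝ,
        (Matrix.det (Matrix.of fun j k => φ j (x k))) *
          (Matrix.det (Matrix.of fun j k => ψ k (x j))) ∂(Measure.pi fun _ => μ))
      = ∫ x : Fin n → ℝ,
          (Matrix.det (Matrix.of fun j k => g j (x k))) *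
            (Matrix.det (Matrix.of fun j k => h k (x j))) ∂(Measure.pi fun _ => μ) :=
        integral_congr_ae hae_det
    _ = ∫ x : Fin n → ℝ,
          (Matrix.det (Matrix.of fun j k => g j (x k))) *
            (Matrix.det (Matrix.of fun j k => h k (x j)))
          ∂((Measure.pi fun _ : Fin n => μ).restrict (Set.pi Set.univ fun _ => T)) := by
        rw [hind, integral_indicator hbox]
        rw [← hind]
    _ = ∫ x : Fin n → ℝ,
          (Matrix.det (Matrix.of fun j k => g j (x k))) *
            (Matrix.det (Matrix.of fun j k => h k (x j)))
          ∂(Measure.pi fun _ : Fin n => μ.restrict T) := by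
        rw [my_restrict_pi μ hT]
    _ = (n.factorial : ℝ) *
          Matrix.det (Matrix.of fun j k => ∫ x, g j x * h k x ∂μ.restrict T) :=
        andreief_core (μ.restrict T) g h hghν
    _ = (n.factorial : ℝ) *
          Matrix.det (Matrix.of fun j k => ∫ x, φ j x * ψ k x ∂μ) := by
        congr 1
        congr 1
        funext j k
        exact hint_eq j k
end

section
/- (Telescoping sum of Gamma ratios) For complex s, t avoiding poles, integers n ≥ 1 and l, one has (s-t-1) · Σ_{k=0}^{n-1} (l - 2n + 2k + 1) · [Γ(t-k)/Γ(s-k)]·[Γ(t+l-2n+k+1)/Γ(s+l-2n+k+1)] = [Γ(t-n+1)/Γ(s-n)]·[Γ(t+l-n+1)/Γ(s+l-n)] - [Γ(t+1)/Γ(s)]·[Γ(t+l-2n+1)/Γ(s+l-2n)]. -/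
open Complex Finset

theorem gamma_ratio_telescoping_sum (s t : ℂ) (n : ℕ) (hn : 1 ≤ n) (l : ℤ)
    (h : ∀ (m : ℕ) (k : ℕ), k ≤ n →
      s - k ≠ -m ∧ t - k ≠ -m ∧ t - k + 1 ≠ -m ∧ t + 1 ≠ -m ∧
      s + l - 2 * n + k ≠ -m ∧ t + l - 2 * n + k ≠ -m ∧
      s + l - 2 * n + k + 1 ≠ -m ∧ t + l - 2 * n + k + 1 ≠ -m) :
    (s - t - 1) *
        ∑ k ∈ Finset.range n,
          ((l : ℂ) - 2 * n + 2 * k + 1) *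
            (Complex.Gamma (t - k) / Complex.Gamma (s - k)) *
            (Complex.Gamma (t + l - 2 * n + k + 1) /
              Complex.Gamma (s + l - 2 * n + k + 1))
      = Complex.Gamma (t - n + 1) / Complex.Gamma (s - n) *
          (Complex.Gamma (t + l - n + 1) / Complex.Gamma (s + l - n)) -
        Complex.Gamma (t + 1) / Complex.Gamma s *
          (Complex.Gamma (t + l - 2 * n + 1) /
            Complex.Gamma (s + l - 2 * n)) := by
  set F : ℕ → ℂ := fun k =>
    Complex.Gamma (t - k + 1) / Complex.Gamma (s - k) *
      (Complex.Gamma (t + l - 2 * n + k + 1) / Complex.Gamma (s + l - 2 * n + k)) with hF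
  have key : ∀ k ∈ Finset.range n,
      (s - t - 1) * (((l : ℂ) - 2 * n + 2 * k + 1) *
        (Complex.Gamma (t - k) / Complex.Gamma (s - k)) *
        (Complex.Gamma (t + l - 2 * n + k + 1) /
          Complex.Gamma (s + l - 2 * n + k + 1)))
      = F (k + 1) - F k := by
    intro k hk
    rw [Finset.mem_range] at hk
    have hGa : Complex.Gamma (s - k) ≠ 0 :=
      Complex.Gamma_ne_zero fun m => (h m k hk.le).1
    have hGd : Complex.Gamma (s + l - 2 * n + k) ≠ 0 :=
      Complex.Gamma_ne_zero fun m => (h m k hk.le).2.2.2.2.1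
    have ha : t - k ≠ 0 := by simpa using (h 0 k hk.le).2.1
    have hb : s - k - 1 ≠ 0 := by
      have := (h 0 (k + 1) hk).1
      push_cast at this
      rw [show s - (k : ℂ) - 1 = s - ((k : ℂ) + 1) by ring]
      simpa using this
    have hd : s + l - 2 * n + k ≠ 0 := by simpa using (h 0 k hk.le).2.2.2.2.1
    have hc1 : t + l - 2 * n + k + 1 ≠ 0 := by simpa using (h 0 k hk.le).2.2.2.2.2.2.2
    have e1 : Complex.Gamma (t - (k + 1 : ℕ) + 1) = Complex.Gamma (t - k) := by
      push_cast; ring_nf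
    have e2 : Complex.Gamma (s - k) = (s - k - 1) * Complex.Gamma (s - (k + 1 : ℕ)) := by
      have := Complex.Gamma_add_one _ hb
      rw [show s - k - 1 + 1 = s - k by ring] at this
      rw [this]; push_cast; ring_nf
    have e3 : Complex.Gamma (t + l - 2 * n + (k + 1 : ℕ) + 1)
        = (t + l - 2 * n + k + 1) * Complex.Gamma (t + l - 2 * n + k + 1) := by
      rw [show t + l - 2 * n + ((k : ℕ) + 1 : ℕ) + 1 = (t + l - 2 * n + k + 1) + 1 by
        push_cast; ring]
      exact Complex.Gamma_add_one _ hc1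
    have e4 : Complex.Gamma (s + l - 2 * n + (k + 1 : ℕ))
        = (s + l - 2 * n + k) * Complex.Gamma (s + l - 2 * n + k) := by
      rw [show s + l - 2 * n + ((k : ℕ) + 1 : ℕ) = (s + l - 2 * n + k) + 1 by
        push_cast; ring]
      exact Complex.Gamma_add_one _ hd
    have e5 : Complex.Gamma (t - k + 1) = (t - k) * Complex.Gamma (t - k) :=
      Complex.Gamma_add_one _ ha
    have e6 : Complex.Gamma (s + l - 2 * n + k + 1)
        = (s + l - 2 * n + k) * Complex.Gamma (s + l - 2 * n + k) := by
      rw [show s + l - 2 * n + k + 1 = (s + l - 2 * n + k) + 1 by ring]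
      exact Complex.Gamma_add_one _ hd
    have hGb1 : Complex.Gamma (s - (k + 1 : ℕ)) ≠ 0 :=
      Complex.Gamma_ne_zero fun m => (h m (k + 1) hk).1
    simp only [hF]
    rw [e1, e3, e4, e5, e6, e2]
    set A := Complex.Gamma (t - (k : ℂ))
    set B := Complex.Gamma (s - ((k : ℕ) + 1 : ℕ))
    set C := Complex.Gamma (t + l - 2 * n + k + 1)
    set D := Complex.Gamma (s + l - 2 * n + k)
    field_simp
    ring
  rw [Finset.mul_sum, Finset.sum_congr rfl key, Finset.sum_range_sub]
  simp only [hF, Nat.cast_zero, sub_zero, add_zero]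
  rw [show t + l - 2 * n + (n : ℂ) + 1 = t + l - n + 1 by ring,
    show s + l - 2 * n + (n : ℂ) = s + l - n by ring]
end

section
/- For θ > 0 and α > -1, the hard-edge kernel K^{(α,θ)}(x,y) = θ x^α ∫_0^1 J_{(α+1)/θ, 1/θ}(xu) · J_{α+1,θ}((yu)^θ) u^α du satisfies the transformation identity (1/θ) x^{1/θ - 1} K^{(α,θ)}(x^{1/θ}, y^{1/θ}) = (x/y)^{α'} K^{(α', 1/θ)}(y, x), where α' = (α+1)/θ - 1. -/
open MeasureTheory Set

/-- Wright's generalization of the Bessel function. -/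
noncomputable def wrightBessel (a b x : ℝ) : ℝ :=
  ∑' j : ℕ, (-1) ^ j * x ^ j / (j.factorial * Real.Gamma (a + j * b))

/-- Borodin's hard edge kernel `K^{(α,θ)}`. -/
noncomputable def borodinKernel (α θ x y : ℝ) : ℝ :=
  θ * x ^ α * ∫ u in Set.Ioo (0 : ℝ) 1,
    wrightBessel ((α + 1) / θ) (1 / θ) (x * u) *
      wrightBessel (α + 1) θ ((y * u) ^ θ) * u ^ α

theorem borodinKernel_parameter_transformation (θ α : ℝ) (hθ : 0 < θ)
    (hα : -1 < α) (x y : ℝ) (hx : 0 < x) (hy : 0 < y) :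
    (1 / θ) * x ^ (1 / θ - 1) *
        borodinKernel α θ (x ^ (1 / θ)) (y ^ (1 / θ))
      = (x / y) ^ ((α + 1) / θ - 1) *
        borodinKernel ((α + 1) / θ - 1) (1 / θ) y x := by
  have hθ' : θ ≠ 0 := hθ.ne'
  have e2 : ((α + 1) / θ - 1 + 1) / (1 / θ) = α + 1 := by field_simp; ring
  have e3 : (1 : ℝ) / (1 / θ) = θ := one_div_one_div θ
  have e1 : (α + 1) / θ - 1 + 1 = (α + 1) / θ := by ring
  rw [borodinKernel, borodinKernel, e2, e3, e1]
  set J1 := wrightBessel ((α + 1) / θ) (1 / θ) with hJ1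
  set J2 := wrightBessel (α + 1) θ with hJ2
  -- Step A: rewrite the LHS integrand
  have stepA : (∫ u in Set.Ioo (0 : ℝ) 1,
        J1 (x ^ (1 / θ) * u) * J2 ((y ^ (1 / θ) * u) ^ θ) * u ^ α)
      = ∫ u in Set.Ioo (0 : ℝ) 1, J1 (x ^ (1 / θ) * u) * J2 (y * u ^ θ) * u ^ α := by
    refine setIntegral_congr_fun measurableSet_Ioo fun u hu => ?_
    have : (y ^ (1 / θ) * u) ^ θ = y * u ^ θ := by
      rw [Real.mul_rpow (Real.rpow_nonneg hy.le _) hu.1.le, ← Real.rpow_mul hy.le,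
        one_div_mul_cancel hθ', Real.rpow_one]
    rw [this]
  -- Step B: change of variables u = v ^ θ in the RHS integral
  have key : (∫ u in Set.Ioo (0 : ℝ) 1,
        J2 (y * u) * J1 ((x * u) ^ (1 / θ)) * u ^ ((α + 1) / θ - 1))
      = θ * ∫ v in Set.Ioo (0 : ℝ) 1, J1 (x ^ (1 / θ) * v) * J2 (y * v ^ θ) * v ^ α := by
    set F : ℝ → ℝ := (Set.Ioo (0 : ℝ) 1).indicator
        (fun u => J2 (y * u) * J1 ((x * u) ^ (1 / θ)) * u ^ ((α + 1) / θ - 1)) with hF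
    have h1 : (∫ u in Set.Ioo (0 : ℝ) 1,
          J2 (y * u) * J1 ((x * u) ^ (1 / θ)) * u ^ ((α + 1) / θ - 1))
        = ∫ u in Set.Ioi (0 : ℝ), F u := by
      rw [hF, integral_indicator measurableSet_Ioo,
        Measure.restrict_restrict measurableSet_Ioo,
        inter_eq_self_of_subset_left Set.Ioo_subset_Ioi_self]
    rw [h1, ← integral_comp_rpow_Ioi_of_pos hθ]
    have h2 : Set.EqOn (fun v : ℝ => (θ * v ^ (θ - 1)) • F (v ^ θ))
        ((Set.Ioo (0 : ℝ) 1).indicator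
          (fun v => θ * (J1 (x ^ (1 / θ) * v) * J2 (y * v ^ θ) * v ^ α)))
        (Set.Ioi (0 : ℝ)) := by
      intro v hv
      have hv0 : (0 : ℝ) < v := hv
      by_cases hv1 : v < 1
      · have hmem : v ∈ Set.Ioo (0 : ℝ) 1 := ⟨hv0, hv1⟩
        have hmemθ : v ^ θ ∈ Set.Ioo (0 : ℝ) 1 :=
          ⟨Real.rpow_pos_of_pos hv0 θ, Real.rpow_lt_one hv0.le hv1 hθ⟩
        rw [Set.indicator_of_mem hmem]
        simp only [hF, Set.indicator_of_mem hmemθ, smul_eq_mul]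
        have hxv : (x * v ^ θ) ^ (1 / θ) = x ^ (1 / θ) * v := by
          rw [Real.mul_rpow hx.le (Real.rpow_nonneg hv0.le _), ← Real.rpow_mul hv0.le,
            mul_one_div_cancel hθ', Real.rpow_one]
        have hvα : (v ^ θ) ^ ((α + 1) / θ - 1) = v ^ (α + 1 - θ) := by
          rw [← Real.rpow_mul hv0.le]
          congr 1
          field_simp
        have hm : v ^ (θ - 1) * v ^ (α + 1 - θ) = v ^ α := by
          rw [← Real.rpow_add hv0]; norm_num
        rw [hxv, hvα]
        calc θ * v ^ (θ - 1) * (J2 (y * v ^ θ) * J1 (x ^ (1 / θ) * v) * v ^ (α + 1 - θ))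
            = θ * (J1 (x ^ (1 / θ) * v) * J2 (y * v ^ θ) * (v ^ (θ - 1) * v ^ (α + 1 - θ))) := by
              ring
          _ = _ := by rw [hm]
      · have hmem : v ∉ Set.Ioo (0 : ℝ) 1 := fun h => hv1 h.2
        have hmemθ : v ^ θ ∉ Set.Ioo (0 : ℝ) 1 := fun h =>
          absurd h.2 (not_lt.mpr (Real.one_le_rpow (not_lt.mp hv1) hθ.le))
        rw [Set.indicator_of_notMem hmem]
        simp only [hF, Set.indicator_of_notMem hmemθ, smul_eq_mul, mul_zero]
    rw [setIntegral_congr_fun measurableSet_Ioi h2,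
      integral_indicator measurableSet_Ioo,
      Measure.restrict_restrict measurableSet_Ioo,
      inter_eq_self_of_subset_left Set.Ioo_subset_Ioi_self,
      integral_const_mul]
  rw [stepA, key]
  -- Step C: scalar algebra
  have hx1 : (x ^ (1 / θ)) ^ α = x ^ (α / θ) := by
    rw [← Real.rpow_mul hx.le]; congr 1; ring
  have hdiv : (x / y) ^ ((α + 1) / θ - 1)
      = x ^ ((α + 1) / θ - 1) / y ^ ((α + 1) / θ - 1) :=
    Real.div_rpow hx.le hy.le _
  have hyne : y ^ ((α + 1) / θ - 1) ≠ 0 := (Real.rpow_pos_of_pos hy _).ne'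
  have hxc : x ^ (1 / θ - 1) * x ^ (α / θ) = x ^ ((α + 1) / θ - 1) := by
    rw [← Real.rpow_add hx]; congr 1; field_simp; ring
  rw [hx1, hdiv]
  field_simp
  rw [show (α + 1 - θ) / θ = (1 - θ) / θ + α / θ by ring, Real.rpow_add hx]
  ring
end
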